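/- arXiv:1610.03157 — 4 statements merged into one kernel-verified Lean document; each statement's English description precedes it below -/
import Mathlib

section
/- For integers q, r with 0 ≤ q ≤ h−1 and 1 ≤ r ≤ n, the point (1,−q,1−nq−r) equals (rh/((n+1)h))·v1 + ((n+1−r)/(n+1))·v2 + (((n+1)q+r)/((n+1)h))·v3 + (((n+1)(h−q)−r)/((n+1)h))·v, where v=(1,0,0); all four coefficients lie in [0,1) and their sum equals 2. -/
/-- For `0 ≤ q ≤ h-1` and `1 ≤ r ≤ n`, the point `(1,-q,1-n*q-r)` equals
`(r*h/((n+1)*h)) • v1 + ((n+1-r)/(n+1)) • v2 + (((n+1)*q+r)/((n+1)*h)) • v3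
 + (((n+1)*(h-q)-r)/((n+1)*h)) • v` with `v = (1,0,0)`; all four coefficients lie
in `[0,1)` and their sum equals `2`. -/
theorem stmt4 (h n : ℕ) (hh : 0 < h) (hn : 0 < n) (q r : ℕ)
    (hq : q ≤ h - 1) (hr1 : 1 ≤ r) (hr2 : r ≤ n) :
    (![1, -(q : ℝ), 1 - (n : ℝ) * (q : ℝ) - (r : ℝ)] : Fin 3 → ℝ)
        = ((r : ℝ) * (h : ℝ) / (((n : ℝ) + 1) * (h : ℝ))) • (![0, 1, 0] : Fin 3 → ℝ)
          + (((n : ℝ) + 1 - (r : ℝ)) / ((n : ℝ) + 1)) • (![0, 0, 1] : Fin 3 → ℝ)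
          + ((((n : ℝ) + 1) * (q : ℝ) + (r : ℝ)) / (((n : ℝ) + 1) * (h : ℝ))) •
              (![1, -(h : ℝ), -((n : ℝ) * (h : ℝ))] : Fin 3 → ℝ)
          + ((((n : ℝ) + 1) * ((h : ℝ) - (q : ℝ)) - (r : ℝ)) / (((n : ℝ) + 1) * (h : ℝ))) •
              (![1, 0, 0] : Fin 3 → ℝ)
      ∧ ((r : ℝ) * (h : ℝ) / (((n : ℝ) + 1) * (h : ℝ)) ∈ Set.Ico (0 : ℝ) 1)
      ∧ (((n : ℝ) + 1 - (r : ℝ)) / ((n : ℝ) + 1) ∈ Set.Ico (0 : ℝ) 1)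
      ∧ ((((n : ℝ) + 1) * (q : ℝ) + (r : ℝ)) / (((n : ℝ) + 1) * (h : ℝ)) ∈ Set.Ico (0 : ℝ) 1)
      ∧ ((((n : ℝ) + 1) * ((h : ℝ) - (q : ℝ)) - (r : ℝ)) / (((n : ℝ) + 1) * (h : ℝ))
          ∈ Set.Ico (0 : ℝ) 1)
      ∧ (r : ℝ) * (h : ℝ) / (((n : ℝ) + 1) * (h : ℝ))
          + ((n : ℝ) + 1 - (r : ℝ)) / ((n : ℝ) + 1)
          + (((n : ℝ) + 1) * (q : ℝ) + (r : ℝ)) / (((n : ℝ) + 1) * (h : ℝ))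
          + (((n : ℝ) + 1) * ((h : ℝ) - (q : ℝ)) - (r : ℝ)) / (((n : ℝ) + 1) * (h : ℝ)) = 2 := by

  have hh' : (1:ℝ) ≤ (h:ℝ) := by exact_mod_cast hh
  have hn' : (1:ℝ) ≤ (n:ℝ) := by exact_mod_cast hn
  have hr1' : (1:ℝ) ≤ (r:ℝ) := by exact_mod_cast hr1
  have hr2' : (r:ℝ) ≤ (n:ℝ) := by exact_mod_cast hr2
  have hq' : (q:ℝ) + 1 ≤ (h:ℝ) := by
    have : q + 1 ≤ h := by omega
    exact_mod_cast this
  have hq0 : (0:ℝ) ≤ (q:ℝ) := Nat.cast_nonneg q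
  have hpos : (0:ℝ) < ((n:ℝ) + 1) * (h:ℝ) := by nlinarith
  have hnpos : (0:ℝ) < (n:ℝ) + 1 := by linarith
  refine ⟨?_, ?_, ?_, ?_, ?_, ?_⟩
  · funext i
    fin_cases i <;>
      simp [Matrix.cons_val_zero, Matrix.cons_val_one] <;>
      field_simp <;> ring
  · constructor
    · positivity
    · rw [div_lt_one hpos]; nlinarith
  · constructor
    · apply div_nonneg _ (le_of_lt hnpos); linarith
    · rw [div_lt_one hnpos]; linarith
  · constructor
    · apply div_nonneg _ (le_of_lt hpos); nlinarith
    · rw [div_lt_one hpos]; nlinarith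
  · constructor
    · apply div_nonneg _ (le_of_lt hpos); nlinarith
    · rw [div_lt_one hpos]; nlinarith
  · field_simp
    ring
end

section
/- Let Δ be the convex hull of v0=(1,1,n), v1=(0,1,0), v2=(0,0,1), v3=(1,−h,−nh) in ℝ³ for positive integers h and n. Then the point w=(1,1,1) cannot be written as α+β where α ∈ Δ ∩ ℤ³ and β ∈ 2Δ° ∩ ℤ³, where Δ° is the topological interior of Δ and 2Δ = {2x : x ∈ Δ}. -/
open Pointwise

/-- From an interior point we can move a little in any direction and stay in the set. -/
lemma nudge {S : Set (Fin 3 → ℝ)} {β : Fin 3 → ℝ} (hβ : β ∈ interior S) (v : Fin 3 → ℝ) :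
    ∃ t : ℝ, 0 < t ∧ β + t • v ∈ S := by
  rw [mem_interior_iff_mem_nhds, Metric.mem_nhds_iff] at hβ
  obtain ⟨ε, hε, hball⟩ := hβ
  refine ⟨ε / (2 * (‖v‖ + 1)), by positivity, hball ?_⟩
  rw [Metric.mem_ball, dist_eq_norm, add_sub_cancel_left, norm_smul]
  have hv : 0 ≤ ‖v‖ := norm_nonneg v
  have : ‖(ε / (2 * (‖v‖ + 1)) : ℝ)‖ = ε / (2 * (‖v‖ + 1)) := by
    rw [Real.norm_eq_abs, abs_of_pos]; positivity
  rw [this]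
  rw [div_mul_eq_mul_div, div_lt_iff₀ (by positivity)]
  nlinarith

/-- If a linear functional is bounded by `d` on `K`, it is strictly bounded by `2*d`
on the interior of `2 • K`, provided some direction increases it. -/
lemma strict_bound {K : Set (Fin 3 → ℝ)} {β : Fin 3 → ℝ} (a b c d : ℝ)
    (hβ : β ∈ interior ((2 : ℝ) • K))
    (hK : ∀ x ∈ K, a * x 0 + b * x 1 + c * x 2 ≤ d)
    (v : Fin 3 → ℝ) (hv : a * v 0 + b * v 1 + c * v 2 = 1) :
    a * β 0 + b * β 1 + c * β 2 < 2 * d := by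
  obtain ⟨t, ht, hmem⟩ := nudge hβ v
  obtain ⟨y, hy, hxy⟩ := hmem
  have h1 := hK y hy
  have e : ∀ i, β i + t * v i = 2 * y i := by
    intro i
    have := congrFun hxy i
    simpa [Pi.smul_apply, smul_eq_mul, Pi.add_apply] using this.symm
  have big : a * β 0 + b * β 1 + c * β 2 + t * (a * v 0 + b * v 1 + c * v 2)
      = 2 * (a * y 0 + b * y 1 + c * y 2) := by
    linear_combination a * e 0 + b * e 1 + c * e 2
  rw [hv] at big
  linarith

set_option maxHeartbeats 1000000 in
/-- The point `w = (1,1,1)` cannot be written as `α + β` with `α` a lattice point of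
the tetrahedron `Δ = conv{v0,v1,v2,v3}` and `β` a lattice point of the interior of
the dilate `2Δ`. -/
theorem stmt5 (h n : ℕ) (hh : 0 < h) (hn : 0 < n) :
    ¬ ∃ α β : Fin 3 → ℝ,
        α ∈ convexHull ℝ ({![1, 1, (n : ℝ)], ![0, 1, 0], ![0, 0, 1],
              ![1, -(h : ℝ), -((n : ℝ) * (h : ℝ))]} : Set (Fin 3 → ℝ))
        ∧ (∀ i, ∃ m : ℤ, α i = (m : ℝ))
        ∧ β ∈ interior ((2 : ℝ) • convexHull ℝ ({![1, 1, (n : ℝ)], ![0, 1, 0], ![0, 0, 1],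
              ![1, -(h : ℝ), -((n : ℝ) * (h : ℝ))]} : Set (Fin 3 → ℝ)))
        ∧ (∀ i, ∃ m : ℤ, β i = (m : ℝ))
        ∧ (![1, 1, 1] : Fin 3 → ℝ) = α + β := by
  rintro ⟨α, β, hα, hαZ, hβ, hβZ, hw⟩
  set S : Set (Fin 3 → ℝ) := {![1, 1, (n : ℝ)], ![0, 1, 0], ![0, 0, 1],
      ![1, -(h : ℝ), -((n : ℝ) * (h : ℝ))]} with hS
  -- generic halfspace bound on the convex hull
  have key : ∀ a b c d : ℝ,
      (a + b + c * n ≤ d) → (b ≤ d) → (c ≤ d) → (a - b * h - c * (n * h) ≤ d) →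
      (∀ x ∈ convexHull ℝ S, a * x 0 + b * x 1 + c * x 2 ≤ d) := by
    intro a b c d h0 h1 h2 h3 x hx
    have hlin : IsLinearMap ℝ (fun x : Fin 3 → ℝ => a * x 0 + b * x 1 + c * x 2) := by
      constructor <;> intros <;>
        simp only [Pi.add_apply, Pi.smul_apply, smul_eq_mul] <;> ring
    refine convexHull_min ?_ (convex_halfSpace_le hlin d) hx
    intro y hy
    simp only [hS, Set.mem_insert_iff, Set.mem_singleton_iff] at hy
    rcases hy with rfl | rfl | rfl | rfl <;>
      simp only [Set.mem_setOf_eq, Matrix.cons_val_zero, Matrix.cons_val_one,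
        Matrix.head_cons, Matrix.cons_val_two, Matrix.tail_cons] <;>
      nlinarith
  have hhn0 : (0:ℝ) ≤ (n:ℝ) := by positivity
  have hhh0 : (0:ℝ) ≤ (h:ℝ) := by positivity
  have hn1 : (1:ℝ) ≤ (n:ℝ) := by exact_mod_cast hn
  have hh1 : (1:ℝ) ≤ (h:ℝ) := by exact_mod_cast hh
  -- the six halfspace bounds
  have L1 : ∀ x ∈ convexHull ℝ S, (-1) * x 0 + 0 * x 1 + 0 * x 2 ≤ 0 :=
    key (-1) 0 0 0 (by nlinarith) le_rfl le_rfl (by nlinarith)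
  have L2 : ∀ x ∈ convexHull ℝ S, 1 * x 0 + 0 * x 1 + 0 * x 2 ≤ 1 :=
    key 1 0 0 1 (by nlinarith) (by norm_num) (by norm_num) (by nlinarith)
  have L3 : ∀ x ∈ convexHull ℝ S, (-(n:ℝ)) * x 0 + 1 * x 1 + 1 * x 2 ≤ 1 :=
    key (-(n:ℝ)) 1 1 1 (by nlinarith) le_rfl le_rfl (by nlinarith)
  have L4 : ∀ x ∈ convexHull ℝ S,
      (-((n:ℝ)*h + h + 1)) * x 0 + (-1) * x 1 + (-1) * x 2 ≤ -1 :=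
    key _ _ _ _ (by nlinarith) (by norm_num) (by norm_num) (by nlinarith)
  have L5 : ∀ x ∈ convexHull ℝ S, 1 * x 0 + (-(n:ℝ)) * x 1 + 1 * x 2 ≤ 1 :=
    key _ _ _ _ (by nlinarith) (by nlinarith) le_rfl (by nlinarith)
  have L6 : ∀ x ∈ convexHull ℝ S, (n:ℝ) * x 0 + (n:ℝ) * x 1 + (-1) * x 2 ≤ (n:ℝ) :=
    key _ _ _ _ (by nlinarith) le_rfl (by nlinarith) (by nlinarith)
  -- strict bounds on β
  have hb0pos : (0:ℝ) < β 0 := by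
    have := strict_bound (-1) 0 0 0 hβ L1 (Pi.single 0 (-1)) (by
      simp [Pi.single_apply])
    nlinarith
  have hb0lt : β 0 < 2 := by
    have := strict_bound 1 0 0 1 hβ L2 (Pi.single 0 1) (by simp [Pi.single_apply])
    nlinarith
  -- β 0 = 1
  obtain ⟨m0, hm0⟩ := hβZ 0
  have hb0 : β 0 = 1 := by
    have h1 : (0:ℝ) < (m0:ℝ) := by rw [← hm0]; exact hb0pos
    have h2 : (m0:ℝ) < 2 := by rw [← hm0]; exact hb0lt
    have : m0 = 1 := by
      have h1' : 0 < m0 := by exact_mod_cast h1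
      have h2' : m0 < 2 := by exact_mod_cast h2
      omega
    rw [hm0, this]; norm_num
  -- coordinates from the equation w = α + β
  have hw0 : (1:ℝ) = α 0 + β 0 := by
    have := congrFun hw 0; simpa using this
  have hw1 : (1:ℝ) = α 1 + β 1 := by
    have := congrFun hw 1; simpa using this
  have hw2 : (1:ℝ) = α 2 + β 2 := by
    have := congrFun hw 2; simpa using this
  have ha0 : α 0 = 0 := by linarith
  -- α 1 + α 2 = 1
  have hA3 := L3 α hα
  have hA4 := L4 α hα
  have hsum : α 1 + α 2 = 1 := by
    rw [ha0] at hA3 hA4; nlinarith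
  -- strict bounds from the slanted facets
  have hf : 1 * β 0 + (-(n:ℝ)) * β 1 + 1 * β 2 < 2 * 1 := by
    refine strict_bound _ _ _ _ hβ L5 (Pi.single 2 1) (by simp [Pi.single_apply])
  have hg : (n:ℝ) * β 0 + (n:ℝ) * β 1 + (-1) * β 2 < 2 * (n:ℝ) := by
    refine strict_bound _ _ _ _ hβ L6 (Pi.single 2 (-1)) (by simp [Pi.single_apply])
  -- derive 0 < α 1 < 1
  have hb1 : β 1 = 1 - α 1 := by linarith
  have hb2 : β 2 = α 1 := by linarith
  rw [hb0, hb1, hb2] at hf hg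
  have hlt : α 1 < 1 := by nlinarith
  have hgt : 0 < α 1 := by nlinarith
  obtain ⟨m1, hm1⟩ := hαZ 1
  rw [hm1] at hlt hgt
  have h1' : 0 < m1 := by exact_mod_cast hgt
  have h2' : m1 < 1 := by exact_mod_cast hlt
  omega
end

section
/- Let Δ be the convex hull of v0=(1,1,n), v1=(0,1,0), v2=(0,0,1), v3=(1,−h,−nh) in ℝ³ for positive integers h and n. Then the open simplex Δ° (interior of Δ) contains no lattice points: Δ° ∩ ℤ³ = ∅. -/
/-- The interior of the tetrahedron `Δ = conv{v0,v1,v2,v3}` contains no lattice points. -/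
theorem stmt8 (h n : ℕ) (hh : 0 < h) (hn : 0 < n) :
    {x : Fin 3 → ℝ |
        x ∈ interior (convexHull ℝ ({![1, 1, (n : ℝ)], ![0, 1, 0], ![0, 0, 1],
              ![1, -(h : ℝ), -((n : ℝ) * (h : ℝ))]} : Set (Fin 3 → ℝ)))
        ∧ ∀ i, ∃ m : ℤ, x i = (m : ℝ)} = ∅ := by
  ext x
  simp only [Set.mem_setOf_eq, Set.mem_empty_iff_false, iff_false, not_and]
  intro hx hint
  obtain ⟨m, hm⟩ := hint 0
  have hsub : convexHull ℝ ({![1, 1, (n : ℝ)], ![0, 1, 0], ![0, 0, 1],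
        ![1, -(h : ℝ), -((n : ℝ) * (h : ℝ))]} : Set (Fin 3 → ℝ)) ⊆
      (fun y : Fin 3 → ℝ => y 0) ⁻¹' Set.Icc (0 : ℝ) 1 := by
    apply convexHull_min
    · rintro y hy
      simp only [Set.mem_insert_iff, Set.mem_singleton_iff] at hy
      rcases hy with rfl | rfl | rfl | rfl <;> norm_num
    · exact (convex_Icc (0 : ℝ) 1).linear_preimage (LinearMap.proj 0 : (Fin 3 → ℝ) →ₗ[ℝ] ℝ)
  have hopen : IsOpenMap (fun y : Fin 3 → ℝ => y 0) := isOpenMap_eval 0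
  have hx' := interior_mono hsub hx
  rw [← hopen.preimage_interior_eq_interior_preimage (continuous_apply 0),
    interior_Icc] at hx'
  obtain ⟨h0, h1⟩ := hx'
  simp only [hm] at h0 h1
  have h0' : (0 : ℤ) < m := by exact_mod_cast h0
  have h1' : m < 1 := by exact_mod_cast h1
  omega
end

section
/- For the tetrahedron Δ with vertices v0=(1,1,n), v1=(0,1,0), v2=(0,0,1), v3=(1,−h,−nh), the set S_Δ = { r_0 v_0 + r_1 v_1 + r_2 v_2 + r_3 v_3 ∈ ℤ³ : 0 ≤ r_i < 1, r_0+r_1+r_2+r_3 ∈ ℕ } has exactly 1 element of height 0, exactly h elements of height 1, and exactly n(h+1) elements of height 2, where the height of an element is r_0+r_1+r_2+r_3; in particular |S_Δ| = (n+1)(h+1). -/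
set_option maxHeartbeats 1000000

noncomputable def e1r (h j : ℕ) : Fin 4 → ℝ :=
  ![(j : ℝ)/(h+1), 0, 0, 1 - (j : ℝ)/(h+1)]

noncomputable def e2r (h n k m : ℕ) : Fin 4 → ℝ :=
  ![((k : ℝ) + (m : ℝ)/(n+1))/(h+1), 1 - (m : ℝ)/(n+1), (m : ℝ)/(n+1),
    1 - ((k : ℝ) + (m : ℝ)/(n+1))/(h+1)]

lemma sum_e1r (h j : ℕ) : ∑ i, e1r h j i = 1 := by
  simp [e1r, Fin.sum_univ_four]

lemma sum_e2r (h n k m : ℕ) : ∑ i, e2r h n k m i = 2 := by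
  simp [e2r, Fin.sum_univ_four]; ring

lemma coord_eqs (h n : ℕ) (r : Fin 4 → ℝ) :
    (∑ i, r i • ![![1, 1, (n : ℝ)], ![0, 1, 0], ![0, 0, 1],
      ![1, -(h : ℝ), -((n : ℝ) * (h : ℝ))]] i) 0 = r 0 + r 3
    ∧ (∑ i, r i • ![![1, 1, (n : ℝ)], ![0, 1, 0], ![0, 0, 1],
      ![1, -(h : ℝ), -((n : ℝ) * (h : ℝ))]] i) 1 = r 0 + r 1 - h * r 3
    ∧ (∑ i, r i • ![![1, 1, (n : ℝ)], ![0, 1, 0], ![0, 0, 1],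
      ![1, -(h : ℝ), -((n : ℝ) * (h : ℝ))]] i) 2 = n * r 0 + r 2 - n * h * r 3 := by
  refine ⟨?_, ?_, ?_⟩ <;>
  · simp [Fin.sum_univ_four]
    try ring

lemma char (h n : ℕ) (hh : 0 < h) (hn : 0 < n) (r : Fin 4 → ℝ) :
    ((∀ i, 0 ≤ r i ∧ r i < 1)
      ∧ (∃ k : ℕ, ∑ i, r i = (k : ℝ))
      ∧ ∀ j, ∃ m : ℤ, (∑ i, r i • ![![1, 1, (n : ℝ)], ![0, 1, 0], ![0, 0, 1],
          ![1, -(h : ℝ), -((n : ℝ) * (h : ℝ))]] i) j = (m : ℝ))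
    ↔ (r = 0 ∨ (∃ j : ℕ, 1 ≤ j ∧ j ≤ h ∧ r = e1r h j)
        ∨ (∃ k m : ℕ, k ≤ h ∧ 1 ≤ m ∧ m ≤ n ∧ r = e2r h n k m)) := by
  obtain ⟨ec0, ec1, ec2⟩ := coord_eqs h n r
  have hh1 : (0:ℝ) < (h:ℝ) + 1 := by positivity
  have hn1 : (0:ℝ) < (n:ℝ) + 1 := by positivity
  constructor
  · rintro ⟨hbox, ⟨kk, hsum⟩, hint⟩
    obtain ⟨m0, hm0⟩ := hint 0
    obtain ⟨m1, hm1⟩ := hint 1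
    obtain ⟨m2, hm2⟩ := hint 2
    rw [ec0] at hm0; rw [ec1] at hm1; rw [ec2] at hm2
    rw [Fin.sum_univ_four] at hsum
    obtain ⟨h00, h01⟩ := hbox 0
    obtain ⟨h10, h11⟩ := hbox 1
    obtain ⟨h20, h21⟩ := hbox 2
    obtain ⟨h30, h31⟩ := hbox 3
    have hm0cases : m0 = 0 ∨ m0 = 1 := by
      have b1 : (0:ℝ) ≤ (m0:ℝ) := by linarith
      have b2 : (m0:ℝ) < 2 := by linarith
      have b1' : (0:ℤ) ≤ m0 := by exact_mod_cast b1
      have b2' : (m0:ℤ) < 2 := by exact_mod_cast b2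
      omega
    rcases hm0cases with h0 | h0
    · -- height 0 : r = 0
      subst h0
      simp only [Int.cast_zero] at hm0
      have hr0 : r 0 = 0 := by linarith
      have hr3 : r 3 = 0 := by linarith
      have hr1 : r 1 = 0 := by
        have : r 1 = (m1:ℝ) := by rw [hr0, hr3] at hm1; linarith
        have b1 : (0:ℤ) ≤ m1 := by exact_mod_cast this ▸ h10
        have b2 : (m1:ℤ) < 1 := by exact_mod_cast this ▸ h11
        have : m1 = 0 := by omega
        simp [this] at *; linarith
      have hr2 : r 2 = 0 := by
        have : r 2 = (m2:ℝ) := by rw [hr0, hr3] at hm2; linarith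
        have b1 : (0:ℤ) ≤ m2 := by exact_mod_cast this ▸ h20
        have b2 : (m2:ℤ) < 1 := by exact_mod_cast this ▸ h21
        have : m2 = 0 := by omega
        simp [this] at *; linarith
      left
      funext i
      fin_cases i <;> simp [hr0, hr1, hr2, hr3]
    · subst h0
      simp only [Int.cast_one] at hm0
      have hr0pos : 0 < r 0 := by linarith
      have hr3 : r 3 = 1 - r 0 := by linarith
      have hkkcases : kk = 1 ∨ kk = 2 := by
        have b1 : (1:ℝ) ≤ (kk:ℝ) := by linarith
        have b2 : (kk:ℝ) < 3 := by linarith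
        have b1' : (1:ℕ) ≤ kk := by exact_mod_cast b1
        have b2' : (kk:ℕ) < 3 := by exact_mod_cast b2
        omega
      rcases hkkcases with hk | hk
      · -- height 1
        subst hk
        simp only [Nat.cast_one] at hsum
        have hr1 : r 1 = 0 := by linarith
        have hr2 : r 2 = 0 := by linarith
        have key : ((h:ℝ) + 1) * r 0 = (m1:ℝ) + h := by
          rw [hr3, hr1] at hm1; linear_combination hm1
        have b1 : (0:ℝ) < (m1:ℝ) + h := by nlinarith
        have b2 : (m1:ℝ) + h < (h:ℝ) + 1 := by nlinarith
        have b1' : (0:ℤ) < m1 + h := by exact_mod_cast b1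
        have b2' : (m1:ℤ) + h < h + 1 := by exact_mod_cast b2
        set j : ℕ := (m1 + h).toNat with hjdef
        have hjcast : (j : ℝ) = (m1:ℝ) + h := by
          have : ((m1 + h : ℤ) : ℝ) = (m1:ℝ) + h := by push_cast; ring
          rw [← this, hjdef]
          norm_cast
          omega
        right; left
        refine ⟨j, by omega, by omega, ?_⟩
        have hr0v : r 0 = (j:ℝ) / (h+1) := by
          rw [hjcast]; field_simp; linarith
        funext i
        fin_cases i <;> simp [e1r, hr0v, hr1, hr2, hr3]
      · -- height 2
        subst hk
        have hsum2 : r 0 + r 1 + r 2 + r 3 = 2 := by exact_mod_cast hsum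
        have hr12 : r 1 + r 2 = 1 := by linarith
        have hr1pos : 0 < r 1 := by linarith
        have key1 : ((n:ℝ) + 1) * r 1 = (n:ℝ) * m1 - m2 + 1 := by
          rw [hr3] at hm1 hm2
          linear_combination (n:ℝ) * hm1 - hm2 + hr12
        set p : ℤ := n * m1 - m2 + 1 with hpdef
        have hpcast : ((p:ℤ):ℝ) = (n:ℝ) * m1 - m2 + 1 := by rw [hpdef]; push_cast; ring
        have b1 : (0:ℝ) < (p:ℝ) := by
          rw [hpcast, ← key1]; exact mul_pos hn1 hr1pos
        have b2 : (p:ℝ) < (n:ℝ) + 1 := by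
          rw [hpcast, ← key1]; exact mul_lt_of_lt_one_right hn1 h11
        have b1' : (0:ℤ) < p := by exact_mod_cast b1
        have b2' : (p:ℤ) < n + 1 := by exact_mod_cast b2
        set m : ℕ := ((n:ℤ) + 1 - p).toNat with hmdef
        have hmcast : (m : ℝ) = (n:ℝ) + 1 - p := by
          have : (((n:ℤ) + 1 - p : ℤ) : ℝ) = (n:ℝ) + 1 - p := by push_cast; ring
          rw [← this, hmdef]
          norm_cast
          omega
        have hr1v : r 1 = 1 - (m:ℝ)/(n+1) := by
          rw [hmcast, hpcast]; field_simp; linarith [key1, hpcast]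
        have hr2v : r 2 = (m:ℝ)/(n+1) := by rw [hr1v] at hr12; linarith
        have key0 : ((h:ℝ) + 1) * r 0 = ((m1:ℝ) + h - 1) + (m:ℝ)/(n+1) := by
          rw [hr3, hr1v] at hm1
          linear_combination hm1
        have hmn1 : (0:ℝ) < (m:ℝ)/(n+1) := by
          apply div_pos _ hn1
          rw [hmcast]; linarith
        have hmn1' : (m:ℝ)/(n+1) < 1 := by
          rw [div_lt_one hn1, hmcast]; linarith
        have hpr : (0:ℝ) < ((h:ℝ) + 1) * r 0 := mul_pos hh1 hr0pos
        have hpr2 : ((h:ℝ) + 1) * r 0 < (h:ℝ) + 1 := mul_lt_of_lt_one_right hh1 h01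
        have c1 : (-1:ℝ) < (m1:ℝ) + h - 1 := by linarith
        have c2 : (m1:ℝ) + h - 1 < (h:ℝ) + 1 := by linarith
        have c1'' : (-1:ℤ) < m1 + h - 1 := by exact_mod_cast c1
        have c1' : (0:ℤ) ≤ m1 + h - 1 := by omega
        have c2' : (m1:ℤ) + h - 1 < h + 1 := by exact_mod_cast c2
        set k : ℕ := (m1 + h - 1).toNat with hkdef
        have hkcast : (k : ℝ) = (m1:ℝ) + h - 1 := by
          have : ((m1 + h - 1 : ℤ) : ℝ) = (m1:ℝ) + h - 1 := by push_cast; ring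
          rw [← this, hkdef]
          norm_cast
          omega
        right; right
        refine ⟨k, m, by omega, ?_, ?_, ?_⟩
        · have b2'' : (p:ℝ) ≤ (n:ℝ) := by exact_mod_cast (by omega : p ≤ (n:ℤ))
          have : (1:ℝ) ≤ (m:ℝ) := by rw [hmcast]; linarith
          exact_mod_cast this
        · have b1'' : (1:ℝ) ≤ (p:ℝ) := by exact_mod_cast b1'
          have : (m:ℝ) ≤ (n:ℝ) := by rw [hmcast]; linarith
          exact_mod_cast this
        · have hr0v : r 0 = ((k:ℝ) + (m:ℝ)/(n+1)) / (h+1) := by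
            rw [hkcast]
            field_simp
            field_simp at key0
            linarith
          have hvec : r = ![r 0, r 1, r 2, r 3] := by
            funext i; fin_cases i <;> rfl
          rw [hvec, hr3, hr0v, hr1v, hr2v]
          rfl
  · rintro (rfl | ⟨j, hj1, hj2, rfl⟩ | ⟨k, m, hkh, hm1, hm2, rfl⟩)
    · refine ⟨by simp, ⟨0, by simp⟩, fun j => ⟨0, ?_⟩⟩
      fin_cases j <;> simp [ec0, ec1, ec2]
    · have hj0 : (0:ℝ) < (j:ℝ) := by exact_mod_cast hj1
      have hjh : (j:ℝ) < (h:ℝ) + 1 := by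
        have : (j:ℝ) ≤ (h:ℝ) := by exact_mod_cast hj2
        linarith
      have hdiv0 : (0:ℝ) < (j:ℝ)/(h+1) := by positivity
      have hdiv1 : (j:ℝ)/(h+1) < 1 := by rw [div_lt_one hh1]; exact hjh
      refine ⟨?_, ⟨1, by rw [sum_e1r]; norm_num⟩, ?_⟩
      · intro i
        fin_cases i <;> simp [e1r] <;> constructor <;> linarith
      · intro i
        fin_cases i
        · exact ⟨1, by simp [Fin.sum_univ_four, e1r]; try field_simp⟩
        · exact ⟨(j:ℤ) - h, by simp [Fin.sum_univ_four, e1r]; push_cast; field_simp; ring⟩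
        · exact ⟨(n:ℤ) * j - n * h, by
            simp [Fin.sum_univ_four, e1r]; push_cast; field_simp; ring⟩
    · have hm0 : (0:ℝ) < (m:ℝ) := by exact_mod_cast hm1
      have hmn : (m:ℝ) < (n:ℝ) + 1 := by
        have : (m:ℝ) ≤ (n:ℝ) := by exact_mod_cast hm2
        linarith
      have hd0 : (0:ℝ) < (m:ℝ)/(n+1) := by positivity
      have hd1 : (m:ℝ)/(n+1) < 1 := by rw [div_lt_one hn1]; exact hmn
      have hk0 : (0:ℝ) ≤ (k:ℝ) := by positivity
      have hkh' : (k:ℝ) ≤ (h:ℝ) := by exact_mod_cast hkh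
      have hx0 : (0:ℝ) < (k:ℝ) + (m:ℝ)/(n+1) := by linarith
      have hx1 : (k:ℝ) + (m:ℝ)/(n+1) < (h:ℝ) + 1 := by linarith
      have hdd0 : (0:ℝ) < ((k:ℝ) + (m:ℝ)/(n+1))/(h+1) := by positivity
      have hdd1 : ((k:ℝ) + (m:ℝ)/(n+1))/(h+1) < 1 := by rw [div_lt_one hh1]; exact hx1
      refine ⟨?_, ⟨2, by rw [sum_e2r]; norm_num⟩, ?_⟩
      · intro i
        fin_cases i <;> simp [e2r] <;> constructor <;> linarith
      · intro i
        fin_cases i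
        · exact ⟨1, by simp [Fin.sum_univ_four, e2r]; try field_simp⟩
        · exact ⟨(k:ℤ) + 1 - h, by
            simp [Fin.sum_univ_four, e2r]; push_cast; field_simp; ring⟩
        · exact ⟨(n:ℤ) * k + m - n * h, by
            simp [Fin.sum_univ_four, e2r]; push_cast; field_simp; ring⟩

/-- For the tetrahedron with vertices `v0=(1,1,n)`, `v1=(0,1,0)`, `v2=(0,0,1)`,
`v3=(1,-h,-n*h)`, the box points `Σ r_i • v_i ∈ ℤ³` with `0 ≤ r_i < 1` and
`Σ r_i ∈ ℕ` comprise exactly `1` element of height `0`, `h` elements of height `1`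
and `n*(h+1)` elements of height `2`; in particular there are `(n+1)*(h+1)` in total.
(Elements are recorded by their coefficient vectors `r`, which determine the points
uniquely by affine independence of the vertices; the height is `Σ r_i`.) -/
theorem stmt10 (h n : ℕ) (hh : 0 < h) (hn : 0 < n) :
    let v : Fin 4 → (Fin 3 → ℝ) := ![![1, 1, (n : ℝ)], ![0, 1, 0], ![0, 0, 1],
      ![1, -(h : ℝ), -((n : ℝ) * (h : ℝ))]]
    let S : Set (Fin 4 → ℝ) := {r | (∀ i, 0 ≤ r i ∧ r i < 1)
      ∧ (∃ k : ℕ, ∑ i, r i = (k : ℝ))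
      ∧ ∀ j, ∃ m : ℤ, (∑ i, r i • v i) j = (m : ℝ)}
    S.ncard = (n + 1) * (h + 1)
      ∧ {r ∈ S | ∑ i, r i = 0}.ncard = 1
      ∧ {r ∈ S | ∑ i, r i = 1}.ncard = h
      ∧ {r ∈ S | ∑ i, r i = 2}.ncard = n * (h + 1) := by
  intro v S
  classical
  have hchar : ∀ r : Fin 4 → ℝ, r ∈ S ↔
      (r = 0 ∨ (∃ j : ℕ, 1 ≤ j ∧ j ≤ h ∧ r = e1r h j)
        ∨ (∃ k m : ℕ, k ≤ h ∧ 1 ≤ m ∧ m ≤ n ∧ r = e2r h n k m)) :=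
    fun r => char h n hh hn r
  set F1 : Finset (Fin 4 → ℝ) := (Finset.Icc 1 h).image (e1r h) with hF1
  set F2 : Finset (Fin 4 → ℝ) :=
    ((Finset.range (h+1)) ×ˢ (Finset.Icc 1 n)).image (fun p => e2r h n p.1 p.2) with hF2
  have sum0 : ∑ i, (0 : Fin 4 → ℝ) i = 0 := by simp
  have inj1 : Function.Injective (e1r h) := by
    intro a b hab
    have := congrFun hab 0
    simp only [e1r, Matrix.cons_val_zero] at this
    have hh1 : ((h:ℝ)+1) ≠ 0 := by positivity
    field_simp at this
    exact_mod_cast this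
  have inj2 : ∀ p₁ ∈ (Finset.range (h+1)) ×ˢ (Finset.Icc 1 n),
      ∀ p₂ ∈ (Finset.range (h+1)) ×ˢ (Finset.Icc 1 n),
      e2r h n p₁.1 p₁.2 = e2r h n p₂.1 p₂.2 → p₁ = p₂ := by
    rintro ⟨k1, m1⟩ _ ⟨k2, m2⟩ _ hab
    have h2 := congrFun hab 2
    have h0 := congrFun hab 0
    simp only [e2r, Matrix.cons_val_two, Matrix.tail_cons, Matrix.head_cons,
      Matrix.cons_val_zero] at h2 h0
    have hn1 : ((n:ℝ)+1) ≠ 0 := by positivity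
    have hh1 : ((h:ℝ)+1) ≠ 0 := by positivity
    have hm : m1 = m2 := by field_simp at h2; exact_mod_cast h2
    subst hm
    have hk : k1 = k2 := by
      field_simp at h0
      have h0' : ((n:ℝ)+1) * k1 = ((n:ℝ)+1) * k2 := by linarith
      exact_mod_cast mul_left_cancel₀ hn1 h0'
    subst hk
    rfl
  have card1 : F1.card = h := by
    rw [hF1, Finset.card_image_of_injective _ inj1, Nat.card_Icc, Nat.add_sub_cancel]
  have card2 : F2.card = (h + 1) * n := by
    rw [hF2, Finset.card_image_of_injOn inj2, Finset.card_product, Finset.card_range,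
      Nat.card_Icc, Nat.add_sub_cancel]
  -- the three height sets
  have hS0 : {r ∈ S | ∑ i, r i = 0} = {(0 : Fin 4 → ℝ)} := by
    ext r
    simp only [Set.mem_setOf_eq, Set.mem_singleton_iff]
    constructor
    · rintro ⟨hrS, hsum⟩
      rcases (hchar r).1 hrS with h' | ⟨j, _, _, rfl⟩ | ⟨k, m, _, _, _, rfl⟩
      · exact h'
      · rw [sum_e1r] at hsum; norm_num at hsum
      · rw [sum_e2r] at hsum; norm_num at hsum
    · rintro rfl
      exact ⟨(hchar 0).2 (Or.inl rfl), sum0⟩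
  have hS1 : {r ∈ S | ∑ i, r i = 1} = (F1 : Set (Fin 4 → ℝ)) := by
    ext r
    simp only [Set.mem_setOf_eq, hF1, Finset.coe_image, Set.mem_image, Finset.mem_coe,
      Finset.mem_Icc]
    constructor
    · rintro ⟨hrS, hsum⟩
      rcases (hchar r).1 hrS with rfl | ⟨j, hj1, hj2, rfl⟩ | ⟨k, m, _, _, _, rfl⟩
      · rw [sum0] at hsum; norm_num at hsum
      · exact ⟨j, ⟨hj1, hj2⟩, rfl⟩
      · rw [sum_e2r] at hsum; norm_num at hsum
    · rintro ⟨j, ⟨hj1, hj2⟩, rfl⟩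
      exact ⟨(hchar _).2 (Or.inr (Or.inl ⟨j, hj1, hj2, rfl⟩)), sum_e1r h j⟩
  have hS2 : {r ∈ S | ∑ i, r i = 2} = (F2 : Set (Fin 4 → ℝ)) := by
    ext r
    simp only [Set.mem_setOf_eq, hF2, Finset.coe_image, Set.mem_image, Finset.mem_coe,
      Finset.mem_product, Finset.mem_range, Finset.mem_Icc]
    constructor
    · rintro ⟨hrS, hsum⟩
      rcases (hchar r).1 hrS with rfl | ⟨j, _, _, rfl⟩ | ⟨k, m, hk, hm1, hm2, rfl⟩
      · rw [sum0] at hsum; norm_num at hsum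
      · rw [sum_e1r] at hsum; norm_num at hsum
      · exact ⟨(k, m), ⟨by omega, hm1, hm2⟩, rfl⟩
    · rintro ⟨⟨k, m⟩, ⟨hk, hm1, hm2⟩, rfl⟩
      exact ⟨(hchar _).2 (Or.inr (Or.inr ⟨k, m, by omega, hm1, hm2, rfl⟩)), sum_e2r h n k m⟩
  have hSunion : S = ({(0 : Fin 4 → ℝ)} ∪ (F1 : Set (Fin 4 → ℝ)) ∪ (F2 : Set (Fin 4 → ℝ))) := by
    ext r
    rw [hchar r]
    simp only [Set.mem_union, Set.mem_singleton_iff, hF1, hF2, Finset.coe_image,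
      Set.mem_image, Finset.mem_coe, Finset.mem_Icc, Finset.mem_product, Finset.mem_range]
    constructor
    · rintro (rfl | ⟨j, hj1, hj2, rfl⟩ | ⟨k, m, hk, hm1, hm2, rfl⟩)
      · exact Or.inl (Or.inl rfl)
      · exact Or.inl (Or.inr ⟨j, ⟨hj1, hj2⟩, rfl⟩)
      · exact Or.inr ⟨(k, m), ⟨by omega, hm1, hm2⟩, rfl⟩
    · rintro ((rfl | ⟨j, ⟨hj1, hj2⟩, rfl⟩) | ⟨⟨k, m⟩, ⟨hk, hm1, hm2⟩, rfl⟩)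
      · exact Or.inl rfl
      · exact Or.inr (Or.inl ⟨j, hj1, hj2, rfl⟩)
      · exact Or.inr (Or.inr ⟨k, m, by omega, hm1, hm2, rfl⟩)
  have sumF1 : ∀ r ∈ (F1 : Set (Fin 4 → ℝ)), ∑ i, r i = 1 := by
    intro r hr
    simp only [hF1, Finset.coe_image, Set.mem_image, Finset.mem_coe] at hr
    obtain ⟨j, _, rfl⟩ := hr
    exact sum_e1r h j
  have sumF2 : ∀ r ∈ (F2 : Set (Fin 4 → ℝ)), ∑ i, r i = 2 := by
    intro r hr
    simp only [hF2, Finset.coe_image, Set.mem_image, Finset.mem_coe] at hr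
    obtain ⟨⟨k, m⟩, _, rfl⟩ := hr
    exact sum_e2r h n k m
  have disj12 : Disjoint (F1 : Set (Fin 4 → ℝ)) (F2 : Set (Fin 4 → ℝ)) := by
    rw [Set.disjoint_left]
    intro r hr1 hr2
    have := sumF1 r hr1
    rw [sumF2 r hr2] at this
    norm_num at this
  have disj0 : Disjoint ({(0 : Fin 4 → ℝ)} : Set (Fin 4 → ℝ))
      ((F1 : Set (Fin 4 → ℝ)) ∪ (F2 : Set (Fin 4 → ℝ))) := by
    rw [Set.disjoint_left]
    rintro r rfl hr
    rcases hr with hr | hr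
    · have := sumF1 _ hr; rw [sum0] at this; norm_num at this
    · have := sumF2 _ hr; rw [sum0] at this; norm_num at this
  have ncard1 : (F1 : Set (Fin 4 → ℝ)).ncard = h := by
    rw [Set.ncard_coe_finset, card1]
  have ncard2 : (F2 : Set (Fin 4 → ℝ)).ncard = (h + 1) * n := by
    rw [Set.ncard_coe_finset, card2]
  have hStotal : S.ncard = (n + 1) * (h + 1) := by
    rw [hSunion, Set.union_assoc, Set.ncard_union_eq disj0 (Set.finite_singleton _)
      ((F1.finite_toSet).union F2.finite_toSet),
      Set.ncard_union_eq disj12 F1.finite_toSet F2.finite_toSet,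
      Set.ncard_singleton, ncard1, ncard2]
    ring
  refine ⟨hStotal, ?_, ?_, ?_⟩
  · rw [hS0, Set.ncard_singleton]
  · rw [hS1, ncard1]
  · rw [hS2, ncard2]; ring
end
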